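/- Let k ≥ 2 be an integer and m, n nonnegative integers, and define A_k(m, n) = ((2m + k − 1)! / (m! · (2m + n + k − 1)! · (k/2)_m)) · (k/(2(k − 1)))^m · ∫_{[0,∞)^k} (e₂(x))^m (e₁(x))^n e^{−e₁(x)} dx. Then A_k(m, n) does not depend on n: for all m, n ≥ 0, A_k(m, n + 1) = A_k(m, n), and hence A_k(m, n) = A_k(m, 0) for all n ≥ 0. -/

import Mathlib

open MeasureTheory Finset

/-- `e₁(x) = ∑ᵢ xᵢ` -/
noncomputable def e1 {k : ℕ} (x : Fin k → ℝ) : ℝ := ∑ i, x i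

/-- `e₂(x) = ∑_{i<j} xᵢ xⱼ` -/
noncomputable def e2 {k : ℕ} (x : Fin k → ℝ) : ℝ := ∑ i, ∑ j ∈ Finset.Ioi i, x i * x j

/-- Pochhammer symbol `(y)ₘ = ∏_{i=0}^{m-1} (y + i)` -/
noncomputable def poch (y : ℝ) (m : ℕ) : ℝ := ∏ i ∈ Finset.range m, (y + i)

/-- The normalized integral `A_k(m, n)` of the paper. -/
noncomputable def A (k m n : ℕ) : ℝ :=
  ((2 * m + k - 1).factorial : ℝ) /
      ((m.factorial : ℝ) * ((2 * m + n + k - 1).factorial : ℝ) * poch ((k : ℝ) / 2) m) *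
    ((k : ℝ) / (2 * ((k : ℝ) - 1))) ^ m *
    ∫ x : Fin k → ℝ in Set.univ.pi fun _ => Set.Ici (0 : ℝ),
      e2 x ^ m * e1 x ^ n * Real.exp (-(e1 x))

section Aux

open scoped ENNReal

variable {k : ℕ}

lemma cont_e1 : Continuous (e1 (k := k)) :=
  continuous_finset_sum _ fun i _ => continuous_apply i
lemma cont_e2 : Continuous (e2 (k := k)) :=
  continuous_finset_sum _ fun i _ => continuous_finset_sum _ fun j _ =>
    (continuous_apply i).mul (continuous_apply j)
lemma e1_smul (s : ℝ) (x : Fin k → ℝ) : e1 (s • x) = s * e1 x := by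
  simp [e1, Finset.mul_sum]
lemma e2_smul (s : ℝ) (x : Fin k → ℝ) : e2 (s • x) = s ^ 2 * e2 x := by
  simp only [e2, Finset.mul_sum]
  refine Finset.sum_congr rfl fun i _ => Finset.sum_congr rfl fun j _ => ?_
  simp [Pi.smul_apply, smul_eq_mul]; ring
lemma measurableSet_T : MeasurableSet (Set.univ.pi fun _ : Fin k => Set.Ici (0:ℝ)) :=
  MeasurableSet.univ_pi fun _ => measurableSet_Ici
lemma mem_T_smul {s : ℝ} (hs : 0 < s) (x : Fin k → ℝ) :
    s • x ∈ (Set.univ.pi fun _ : Fin k => Set.Ici (0:ℝ)) ↔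
      x ∈ (Set.univ.pi fun _ : Fin k => Set.Ici (0:ℝ)) := by
  simp only [Set.mem_pi, Set.mem_univ, forall_true_left, Set.mem_Ici, Pi.smul_apply,
    smul_eq_mul]
  exact forall_congr' fun i => by
    constructor
    · intro h; nlinarith
    · intro h; positivity

/-- The basic lintegral. -/
noncomputable def Jint (k m p : ℕ) : ℝ≥0∞ :=
  ∫⁻ x : Fin k → ℝ in Set.univ.pi fun _ => Set.Ici (0:ℝ),
    ENNReal.ofReal (e2 x ^ m * e1 x ^ p * Real.exp (-(e1 x)))

lemma meas_integrand (m p : ℕ) (s : ℝ) :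
    Measurable fun x : Fin k → ℝ =>
      ENNReal.ofReal (e2 x ^ m * e1 x ^ p * Real.exp (-(s * e1 x))) := by
  apply (Continuous.measurable ?_).ennreal_ofReal
  exact ((cont_e2.pow m).mul (cont_e1.pow p)).mul
    (Real.continuous_exp.comp (continuous_const.mul cont_e1).neg)

lemma scale (k m p : ℕ) {s : ℝ} (hs : 0 < s) :
    (∫⁻ x : Fin k → ℝ in Set.univ.pi fun _ => Set.Ici (0:ℝ),
        ENNReal.ofReal (e2 x ^ m * e1 x ^ p * Real.exp (-(s * e1 x))))
      = ENNReal.ofReal ((s ^ (2*m+p+k))⁻¹) * Jint k m p := by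
  set T : Set (Fin k → ℝ) := Set.univ.pi fun _ => Set.Ici (0:ℝ) with hT
  set g : (Fin k → ℝ) → ℝ≥0∞ :=
    T.indicator fun x => ENNReal.ofReal (e2 x ^ m * e1 x ^ p * Real.exp (-(e1 x))) with hg
  have hgm : Measurable g := by
    refine Measurable.indicator ?_ measurableSet_T
    refine (Continuous.measurable ?_).ennreal_ofReal
    exact ((cont_e2.pow m).mul (cont_e1.pow p)).mul (Real.continuous_exp.comp cont_e1.neg)
  have hptw : ∀ x : Fin k → ℝ, g (s • x)
      = ENNReal.ofReal (s ^ (2*m+p)) *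
        T.indicator (fun x => ENNReal.ofReal (e2 x ^ m * e1 x ^ p * Real.exp (-(s * e1 x)))) x := by
    intro x
    rw [hg]
    by_cases hx : x ∈ T
    · rw [Set.indicator_of_mem ((mem_T_smul hs x).mpr hx), Set.indicator_of_mem hx,
        e1_smul, e2_smul, ← ENNReal.ofReal_mul (by positivity)]
      congr 1
      ring
    · rw [Set.indicator_of_notMem (fun h => hx ((mem_T_smul hs x).mp h)),
        Set.indicator_of_notMem hx, mul_zero]
  have key : (∫⁻ x, g (s • x)) = ENNReal.ofReal ((s ^ k)⁻¹) * Jint k m p := by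
    calc ∫⁻ x, g (s • x) = ∫⁻ y, g y ∂(Measure.map (fun x : Fin k → ℝ => s • x) volume) :=
          (lintegral_map hgm (measurable_const_smul s)).symm
    _ = ENNReal.ofReal |(s ^ Module.finrank ℝ (Fin k → ℝ))⁻¹| * ∫⁻ y, g y := by
          rw [MeasureTheory.Measure.map_addHaar_smul volume hs.ne', lintegral_smul_measure, smul_eq_mul]
    _ = ENNReal.ofReal ((s ^ k)⁻¹) * Jint k m p := by
          rw [Module.finrank_fin_fun, abs_of_pos (by positivity), hg,
            lintegral_indicator measurableSet_T]
          rfl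
  have key2 : (∫⁻ x, g (s • x)) = ENNReal.ofReal (s ^ (2*m+p)) *
      ∫⁻ x in T, ENNReal.ofReal (e2 x ^ m * e1 x ^ p * Real.exp (-(s * e1 x))) := by
    simp_rw [hptw]
    rw [lintegral_const_mul' _ _ ENNReal.ofReal_ne_top, lintegral_indicator measurableSet_T]
  have hpos : (0:ℝ) < s ^ (2*m+p) := by positivity
  have h3 := key2.symm.trans key
  have h4 : (∫⁻ x in T, ENNReal.ofReal (e2 x ^ m * e1 x ^ p * Real.exp (-(s * e1 x))))
      = ENNReal.ofReal ((s ^ (2*m+p))⁻¹) * (ENNReal.ofReal ((s^k)⁻¹) * Jint k m p) := by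
    rw [← h3, ← mul_assoc, ← ENNReal.ofReal_mul (by positivity), inv_mul_cancel₀ hpos.ne',
      ENNReal.ofReal_one, one_mul]
  rw [h4, ← mul_assoc, ← ENNReal.ofReal_mul (by positivity), ← mul_inv, ← pow_add]

lemma null_zero (hk : 1 ≤ k) : (volume : Measure (Fin k → ℝ)) {0} = 0 := by
  have h : ({0} : Set (Fin k → ℝ)) = Set.pi Set.univ (fun _ => ({0} : Set ℝ)) := by
    ext x; simp [funext_iff, Set.mem_pi]
  rw [h, volume_pi_pi]
  simp only [Real.volume_singleton, Finset.prod_const, Finset.card_univ, Fintype.card_fin]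
  exact zero_pow (by omega)

lemma e2_nonneg {x : Fin k → ℝ} (hx : x ∈ (Set.univ.pi fun _ : Fin k => Set.Ici (0:ℝ))) :
    0 ≤ e2 x := by
  refine Finset.sum_nonneg fun i _ => Finset.sum_nonneg fun j _ => ?_
  exact mul_nonneg (hx i (Set.mem_univ i)) (hx j (Set.mem_univ j))

lemma e1_nonneg {x : Fin k → ℝ} (hx : x ∈ (Set.univ.pi fun _ : Fin k => Set.Ici (0:ℝ))) :
    0 ≤ e1 x := Finset.sum_nonneg fun i _ => hx i (Set.mem_univ i)

lemma e1_pos {x : Fin k → ℝ} (hx : x ∈ (Set.univ.pi fun _ : Fin k => Set.Ici (0:ℝ)))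
    (hx0 : x ≠ 0) : 0 < e1 x := by
  obtain ⟨i, hi⟩ := Function.ne_iff.mp hx0
  have h1 : 0 < x i := lt_of_le_of_ne (hx i (Set.mem_univ i)) (Ne.symm hi)
  calc (0:ℝ) < x i := h1
    _ ≤ e1 x := Finset.single_le_sum (fun j _ => hx j (Set.mem_univ j)) (Finset.mem_univ i)

lemma inner_eq {x : Fin k → ℝ} (m n : ℕ)
    (hx : x ∈ Set.univ.pi fun _ : Fin k => Set.Ici (0:ℝ)) (hx0 : x ≠ 0) :
    (∫⁻ s in Set.Ioi (1:ℝ),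
        ENNReal.ofReal (e2 x ^ m * e1 x ^ (n+1) * Real.exp (-(s * e1 x))))
      = ENNReal.ofReal (e2 x ^ m * e1 x ^ n * Real.exp (-(e1 x))) := by
  have ht : 0 < e1 x := e1_pos hx hx0
  set t := e1 x with hts
  set c := e2 x ^ m * e1 x ^ n with hc
  have hcn : 0 ≤ c := mul_nonneg (pow_nonneg (e2_nonneg hx) m) (pow_nonneg ht.le n)
  have hre : ∀ s : ℝ,
      e2 x ^ m * t ^ (n+1) * Real.exp (-(s * t)) = c * (t * Real.exp (-t * s)) := by
    intro s
    rw [hc, pow_succ, show -(s*t) = -t*s by ring, hts]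
    ring
  simp_rw [hre]
  have hint : IntegrableOn (fun s : ℝ => t * Real.exp (-t * s)) (Set.Ioi (1:ℝ)) :=
    (exp_neg_integrableOn_Ioi 1 ht).const_mul t
  have hJ : ∫ s in Set.Ioi (1:ℝ), t * Real.exp (-t * s) = Real.exp (-t) := by
    rw [MeasureTheory.integral_const_mul]
    have h1 : ∫ s in Set.Ioi (1:ℝ), Real.exp (-t * s) = t⁻¹ * Real.exp (-t) := by
      have h2 := integral_comp_mul_left_Ioi (fun u => Real.exp (-u)) 1 ht
      simp only [smul_eq_mul, mul_one] at h2
      rw [show (fun s : ℝ => Real.exp (-t * s)) = fun s => Real.exp (-(t * s)) by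
        funext s; ring_nf]
      rw [h2, integral_exp_neg_Ioi]
    rw [h1]
    field_simp
  calc (∫⁻ s in Set.Ioi (1:ℝ), ENNReal.ofReal (c * (t * Real.exp (-t * s))))
      = ENNReal.ofReal c * ∫⁻ s in Set.Ioi (1:ℝ), ENNReal.ofReal (t * Real.exp (-t * s)) := by
        simp_rw [ENNReal.ofReal_mul hcn]
        rw [lintegral_const_mul' _ _ ENNReal.ofReal_ne_top]
    _ = ENNReal.ofReal c * ENNReal.ofReal (Real.exp (-t)) := by
        rw [← ofReal_integral_eq_lintegral_ofReal hint
          (Filter.Eventually.of_forall fun s => mul_nonneg ht.le (Real.exp_pos _).le), hJ]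
    _ = ENNReal.ofReal (e2 x ^ m * e1 x ^ n * Real.exp (-t)) := by
        rw [← ENNReal.ofReal_mul hcn, hc]

lemma Jsucc (k m n : ℕ) (hk : 1 ≤ k) :
    Jint k m (n+1) = ((2*m+n+k : ℕ) : ℝ≥0∞) * Jint k m n := by
  set N : ℕ := 2*m+n+k with hN
  have hN1 : 1 ≤ N := by omega
  have hmeas : AEMeasurable
      (fun p : (Fin k → ℝ) × ℝ =>
        ENNReal.ofReal (e2 p.1 ^ m * e1 p.1 ^ (n+1) * Real.exp (-(p.2 * e1 p.1))))
      (((volume : Measure (Fin k → ℝ)).restrict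
          (Set.univ.pi fun _ => Set.Ici (0:ℝ))).prod
        ((volume : Measure ℝ).restrict (Set.Ioi 1))) := by
    refine Continuous.aemeasurable ?_
    refine ENNReal.continuous_ofReal.comp ?_
    exact (((cont_e2.comp continuous_fst).pow m).mul
      ((cont_e1.comp continuous_fst).pow (n+1))).mul
      (Real.continuous_exp.comp (continuous_snd.mul (cont_e1.comp continuous_fst)).neg)
  have hC : Jint k m n = ∫⁻ x : Fin k → ℝ in Set.univ.pi fun _ => Set.Ici (0:ℝ),
      ∫⁻ s in Set.Ioi (1:ℝ),
        ENNReal.ofReal (e2 x ^ m * e1 x ^ (n+1) * Real.exp (-(s * e1 x))) := by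
    refine lintegral_congr_ae ?_
    have h0 : ∀ᵐ x : Fin k → ℝ ∂volume, x ≠ 0 := by
      rw [ae_iff]
      have : {x : Fin k → ℝ | ¬ x ≠ 0} = {0} := by ext x; simp
      rw [this]
      exact null_zero hk
    refine (ae_restrict_iff' measurableSet_T).mpr ?_
    filter_upwards [h0] with x hx0 hxT
    exact (inner_eq m n hxT hx0).symm
  have hs1 : ∀ s ∈ Set.Ioi (1:ℝ),
      (∫⁻ x : Fin k → ℝ in Set.univ.pi fun _ => Set.Ici (0:ℝ),
        ENNReal.ofReal (e2 x ^ m * e1 x ^ (n+1) * Real.exp (-(s * e1 x))))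
      = ENNReal.ofReal ((s ^ (N+1))⁻¹) * Jint k m (n+1) := by
    intro s hs
    have h := scale k m (n+1) (lt_trans zero_lt_one hs)
    rwa [show 2*m+(n+1)+k = N+1 by omega] at h
  have hmeas2 : AEMeasurable (fun s : ℝ => ENNReal.ofReal ((s ^ (N+1))⁻¹))
      ((volume : Measure ℝ).restrict (Set.Ioi 1)) :=
    (Measurable.ennreal_ofReal ((measurable_id.pow_const (N+1)).inv)).aemeasurable
  have hval : (∫⁻ s in Set.Ioi (1:ℝ), ENNReal.ofReal ((s ^ (N+1))⁻¹))
      = ((N : ℝ≥0∞))⁻¹ := by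
    have ha : (-((N:ℝ)+1)) < -1 := by
      have : (1:ℝ) ≤ (N:ℝ) := by exact_mod_cast hN1
      linarith
    have hpt : ∀ s ∈ Set.Ioi (1:ℝ), s ^ (-((N:ℝ)+1)) = (s ^ (N+1))⁻¹ := by
      intro s hs
      have hs0 : (0:ℝ) < s := lt_trans zero_lt_one hs
      rw [Real.rpow_neg hs0.le, show ((N:ℝ)+1) = ((N+1 : ℕ) : ℝ) by push_cast; ring,
        Real.rpow_natCast]
    have hintg : IntegrableOn (fun s : ℝ => (s ^ (N+1))⁻¹) (Set.Ioi (1:ℝ)) := by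
      refine (integrableOn_Ioi_rpow_of_lt ha zero_lt_one).congr_fun ?_ measurableSet_Ioi
      intro s hs
      exact hpt s hs
    have hIval : ∫ s in Set.Ioi (1:ℝ), (s ^ (N+1))⁻¹ = (N:ℝ)⁻¹ := by
      rw [← setIntegral_congr_fun measurableSet_Ioi hpt,
        integral_Ioi_rpow_of_lt ha zero_lt_one, Real.one_rpow]
      rw [show -((N:ℝ)+1)+1 = -(N:ℝ) by ring, div_neg, neg_div, neg_neg, one_div]
    rw [← ofReal_integral_eq_lintegral_ofReal hintg
      ((ae_restrict_iff' measurableSet_Ioi).mpr (Filter.Eventually.of_forall fun s hs =>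
        inv_nonneg.mpr (pow_nonneg (le_of_lt (lt_trans zero_lt_one hs)) _))), hIval,
      ENNReal.ofReal_inv_of_pos (by exact_mod_cast Nat.lt_of_lt_of_le Nat.zero_lt_one hN1),
      ENNReal.ofReal_natCast]
  have hfin : Jint k m n = ((N : ℝ≥0∞))⁻¹ * Jint k m (n+1) := by
    rw [hC, lintegral_lintegral_swap hmeas,
      setLIntegral_congr_fun measurableSet_Ioi hs1,
      lintegral_mul_const'' _ hmeas2, hval, mul_comm]
  rw [hfin, ← mul_assoc, ENNReal.mul_inv_cancel
    (by exact_mod_cast (show N ≠ 0 by omega)) (ENNReal.natCast_ne_top N), one_mul]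

lemma int_eq (k m p : ℕ) :
    (∫ x : Fin k → ℝ in Set.univ.pi fun _ => Set.Ici (0:ℝ),
      e2 x ^ m * e1 x ^ p * Real.exp (-(e1 x))) = (Jint k m p).toReal := by
  rw [integral_eq_lintegral_of_nonneg_ae ?nn ?m]
  · rfl
  case nn =>
    refine (ae_restrict_iff' measurableSet_T).mpr (Filter.Eventually.of_forall fun x hx => ?_)
    exact mul_nonneg (mul_nonneg (pow_nonneg (e2_nonneg hx) m)
      (pow_nonneg (e1_nonneg hx) p)) (Real.exp_pos _).le
  case m =>
    exact Continuous.aestronglyMeasurable (((cont_e2.pow m).mul (cont_e1.pow p)).mul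
      (Real.continuous_exp.comp cont_e1.neg))

lemma alg (a q r I N : ℝ) (hN : N ≠ 0) : a / (N * q) * r * (N * I) = a / q * r * I := by
  have h1 : a / (N * q) = N⁻¹ * (a / q) := by
    rw [mul_comm N q, ← div_div, div_eq_mul_inv (a / q) N, mul_comm]
  rw [h1, show N⁻¹ * (a / q) * r * (N * I) = (N⁻¹ * N) * (a / q * r * I) by ring,
    inv_mul_cancel₀ hN, one_mul]

end Aux

theorem stmt11 (k m : ℕ) (hk : 2 ≤ k) :
    (∀ n : ℕ, A k m (n + 1) = A k m n) ∧ ∀ n : ℕ, A k m n = A k m 0 := by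
  have key : ∀ n : ℕ, A k m (n + 1) = A k m n := by
    intro n
    unfold A
    rw [int_eq, int_eq, Jsucc k m n (by omega), ENNReal.toReal_mul, ENNReal.toReal_natCast]
    have hfact : ((2*m+(n+1)+k-1).factorial : ℝ)
        = ((2*m+n+k : ℕ) : ℝ) * ((2*m+n+k-1).factorial : ℝ) := by
      rw [show 2*m+(n+1)+k-1 = (2*m+n+k-1)+1 by omega, Nat.factorial_succ,
        show (2*m+n+k) = (2*m+n+k-1)+1 by omega]
      push_cast
      ring
    rw [hfact,
      show (m.factorial : ℝ) * (((2*m+n+k : ℕ):ℝ) * ((2*m+n+k-1).factorial : ℝ)) *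
          poch ((k:ℝ)/2) m
        = ((2*m+n+k : ℕ):ℝ) * ((m.factorial : ℝ) * ((2*m+n+k-1).factorial : ℝ) *
            poch ((k:ℝ)/2) m) by ring]
    exact alg _ _ _ _ _ (Nat.cast_ne_zero.mpr (by omega))
  refine ⟨key, fun n => ?_⟩
  induction n with
  | zero => rfl
  | succ n ih => rw [key n, ih]
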